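/- Suppose u₀ ≠ 0, v₀ = 0, and α(γ₀ + α/β²) ≤ ‖u₀‖²/8. Then the projection of (u₀, 0, γ₀) onto C̃_α equals {(u₀/2, v, γ₀ + α/β²) : v ∈ X, ‖v‖ = √(−2α(γ₀ + α/β²) + ‖u₀‖²/4)}. -/

import Mathlib

variable {X : Type*} [NormedAddCommGroup X] [InnerProductSpace ℝ X]

/-- Squared β-weighted distance on `X × X × ℝ`. -/
noncomputable def d2 (β : ℝ) (p q : X × X × ℝ) : ℝ :=
  ‖p.1 - q.1‖^2 + ‖p.2.1 - q.2.1‖^2 + β^2 * (p.2.2 - q.2.2)^2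

/-- The set of nearest points of `S` to `z` in the β-weighted norm. -/
noncomputable def projSet (β : ℝ) (S : Set (X × X × ℝ)) (z : X × X × ℝ) :
    Set (X × X × ℝ) :=
  {p | p ∈ S ∧ ∀ q ∈ S, d2 β p z ≤ d2 β q z}

/-- The set `C̃_α`. -/
def Ctilde (α : ℝ) : Set (X × X × ℝ) := {p | ‖p.1‖^2 - ‖p.2.1‖^2 = 2 * α * p.2.2}

/-- The set `C_α`. -/
def Cα (α : ℝ) : Set (X × X × ℝ) := {p | (inner ℝ p.1 p.2.1 : ℝ) = α * p.2.2}

lemma key_id (α β γ₀ : ℝ) (hβ : β ≠ 0) (u₀ : X) (p : X × X × ℝ) (hp : p ∈ Ctilde α) :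
    d2 β p (u₀, (0:X), γ₀) =
      2*‖p.1 - (2:ℝ)⁻¹ • u₀‖^2 + β^2*(p.2.2 - (γ₀ + α/β^2))^2
        + (‖u₀‖^2/2 - 2*α*γ₀ - α^2/β^2) := by
  have hp' : ‖p.2.1‖^2 = ‖p.1‖^2 - 2*α*p.2.2 := by
    have h := hp; simp only [Ctilde, Set.mem_setOf_eq] at h; linarith
  have e1 : ‖p.1 - u₀‖^2 = ‖p.1‖^2 - 2*(inner ℝ p.1 u₀ : ℝ) + ‖u₀‖^2 := by
    rw [@norm_sub_sq_real]
  have e2 : ‖p.1 - (2:ℝ)⁻¹ • u₀‖^2 = ‖p.1‖^2 - (inner ℝ p.1 u₀ : ℝ) + ‖u₀‖^2/4 := by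
    rw [@norm_sub_sq_real, real_inner_smul_right, norm_smul]
    have h2 : ‖(2:ℝ)⁻¹‖ = 2⁻¹ := by norm_num
    rw [h2]; ring
  simp only [d2, sub_zero]
  rw [hp', e1, e2]
  field_simp
  ring

theorem stmt13 (α β γ₀ : ℝ) (hα : α ≠ 0) (hβ : 0 < β) (u₀ : X) (hu : u₀ ≠ 0)
    (hcase : α * (γ₀ + α / β^2) ≤ ‖u₀‖^2 / 8) :
    projSet β (Ctilde α) (u₀, (0 : X), γ₀) =
      {p : X × X × ℝ | ∃ v : X,
        ‖v‖ = Real.sqrt (-2 * α * (γ₀ + α / β^2) + ‖u₀‖^2 / 4) ∧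
        p = ((2 : ℝ)⁻¹ • u₀, v, γ₀ + α / β^2)} := by
  have hβ' : β ≠ 0 := ne_of_gt hβ
  set γs := γ₀ + α / β^2 with hγs
  set r2 := -2 * α * γs + ‖u₀‖^2 / 4 with hr2def
  have hr2 : 0 ≤ r2 := by rw [hr2def]; nlinarith [hcase]
  have hsq : Real.sqrt r2 ^ 2 = r2 := Real.sq_sqrt hr2
  have hnormhalf : ‖(2:ℝ)⁻¹ • u₀‖^2 = ‖u₀‖^2/4 := by
    rw [norm_smul]; simp [Real.norm_eq_abs]; ring
  -- membership of points of the claimed form in Ctilde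
  have hmem : ∀ v : X, ‖v‖ = Real.sqrt r2 →
      (((2:ℝ)⁻¹ • u₀, v, γs) : X × X × ℝ) ∈ Ctilde α := by
    intro v hv
    simp only [Ctilde, Set.mem_setOf_eq]
    have : ‖v‖^2 = r2 := by rw [hv]; exact hsq
    rw [hnormhalf, this, hr2def]; ring
  -- distance of such points
  have hdist : ∀ v : X, ‖v‖ = Real.sqrt r2 →
      d2 β (((2:ℝ)⁻¹ • u₀, v, γs) : X × X × ℝ) (u₀, (0:X), γ₀)
        = ‖u₀‖^2/2 - 2*α*γ₀ - α^2/β^2 := by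
    intro v hv
    rw [key_id α β γ₀ hβ' u₀ _ (hmem v hv)]
    simp
    exact Or.inr (by rw [hγs]; ring)
  -- a concrete element of the claimed form
  have hu0 : ‖u₀‖ ≠ 0 := norm_ne_zero_iff.mpr hu
  set w : X := (Real.sqrt r2 / ‖u₀‖) • u₀ with hw
  have hwn : ‖w‖ = Real.sqrt r2 := by
    rw [hw, norm_smul, Real.norm_eq_abs, abs_of_nonneg (by positivity), div_mul_cancel₀ _ hu0]
  clear_value γs r2 w
  ext p
  constructor
  · rintro ⟨hpC, hpmin⟩
    have hle := hpmin _ (hmem w hwn)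
    rw [hdist w hwn, key_id α β γ₀ hβ' u₀ p hpC, ← hγs] at hle
    have hb2 : 0 < β^2 := by positivity
    have hterm : 2*‖p.1 - (2:ℝ)⁻¹ • u₀‖^2 + β^2*(p.2.2 - γs)^2 ≤ 0 := by linarith
    have h0 : ‖p.1 - (2:ℝ)⁻¹ • u₀‖^2 = 0 := by
      nlinarith [sq_nonneg ‖p.1 - (2:ℝ)⁻¹ • u₀‖, mul_nonneg hb2.le (sq_nonneg (p.2.2 - γs))]
    have h1 : p.1 = (2:ℝ)⁻¹ • u₀ := by
      have := pow_eq_zero_iff (n := 2) (by norm_num) |>.mp h0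
      exact sub_eq_zero.mp (norm_eq_zero.mp this)
    have h2 : p.2.2 = γs := by
      have h0' : (p.2.2 - γs)^2 = 0 := by
        by_contra h
        have hs : 0 < (p.2.2 - γs)^2 := lt_of_le_of_ne (sq_nonneg _) (Ne.symm h)
        have := mul_pos hb2 hs
        linarith
      exact sub_eq_zero.mp (pow_eq_zero_iff (n := 2) (by norm_num) |>.mp h0')
    refine ⟨p.2.1, ?_, ?_⟩
    · have hC := hpC
      simp only [Ctilde, Set.mem_setOf_eq] at hC
      rw [h1, h2, hnormhalf] at hC
      have : ‖p.2.1‖^2 = r2 := by rw [hr2def]; linarith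
      rw [← this, Real.sqrt_sq (norm_nonneg _)]
    · rw [← h1, ← h2]
  · rintro ⟨v, hv, rfl⟩
    refine ⟨hmem v hv, ?_⟩
    intro q hq
    rw [hdist v hv, key_id α β γ₀ hβ' u₀ q hq]
    rw [← hγs]
    have h1 : 0 ≤ 2*‖q.1 - (2:ℝ)⁻¹ • u₀‖^2 := by positivity
    have h2 : 0 ≤ β^2*(q.2.2 - γs)^2 := by positivity
    linarith
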